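/- W^{Cyril} admits the fully separable decomposition W^{Cyril} = (1/2)[ P^z_+ P^z_+ P^α_+ P^x_+ + P^z_- P^z_+ P^α_- P^x_+ + P^z_+ P^z_+ P^β_+ P^x_- + P^z_- P^z_+ P^β_- P^x_- + P^z_+ P^z_- P^β_- P^x_+ + P^z_- P^z_- P^β_+ P^x_+ + P^z_+ P^z_- P^α_- P^x_- + P^z_- P^z_- P^α_+ P^x_- ], where juxtaposition denotes tensor product; hence W^{Cyril} is separable across the partition A_I|A_O|B_I|B_O. -/

import Mathlib

open scoped BigOperators Kronecker ComplexOrder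

/-- Pauli X. -/
def sigma1 : Matrix (Fin 2) (Fin 2) ℂ := !![0, 1; 1, 0]

/-- Pauli Z. -/
def sigma3 : Matrix (Fin 2) (Fin 2) ℂ := !![1, 0; 0, -1]

/-- The process matrix
`W^{Cyril} = (1/4)[I⊗I⊗I⊗I + (1/√2)(σ³⊗σ³⊗σ³⊗I + σ³⊗I⊗σ¹⊗σ¹)]`
on `(ℂ²)^{⊗4}` with tensor factors ordered `A_I, A_O, B_I, B_O` and grouped
as `(A_I × A_O) × (B_I × B_O)`. -/
noncomputable def WCyril :
    Matrix ((Fin 2 × Fin 2) × (Fin 2 × Fin 2)) ((Fin 2 × Fin 2) × (Fin 2 × Fin 2)) ℂ :=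
  (1 / 4 : ℂ) • ((1 : Matrix ((Fin 2 × Fin 2) × (Fin 2 × Fin 2)) ((Fin 2 × Fin 2) × (Fin 2 × Fin 2)) ℂ)
    + ((Real.sqrt 2 : ℂ))⁻¹ •
      ((sigma3 ⊗ₖ sigma3) ⊗ₖ (sigma3 ⊗ₖ (1 : Matrix (Fin 2) (Fin 2) ℂ))
        + (sigma3 ⊗ₖ (1 : Matrix (Fin 2) (Fin 2) ℂ)) ⊗ₖ (sigma1 ⊗ₖ sigma1)))


noncomputable def Pz (s : Bool) : Matrix (Fin 2) (Fin 2) ℂ :=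
  (1 / 2 : ℂ) • (1 + (if s then 1 else -1 : ℂ) • sigma3)

noncomputable def Px (s : Bool) : Matrix (Fin 2) (Fin 2) ℂ :=
  (1 / 2 : ℂ) • (1 + (if s then 1 else -1 : ℂ) • sigma1)

noncomputable def Pα (s : Bool) : Matrix (Fin 2) (Fin 2) ℂ :=
  (1 / 2 : ℂ) • (1 + ((if s then 1 else -1 : ℂ) * ((Real.sqrt 2 : ℂ))⁻¹) • (sigma3 + sigma1))

noncomputable def Pβ (s : Bool) : Matrix (Fin 2) (Fin 2) ℂ :=
  (1 / 2 : ℂ) • (1 + ((if s then 1 else -1 : ℂ) * ((Real.sqrt 2 : ℂ))⁻¹) • (sigma3 - sigma1))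

open Matrix

set_option maxHeartbeats 2000000 in
private lemma decomp_aux (c : ℂ) :
    (1 / 4 : ℂ) • ((1 : Matrix ((Fin 2 × Fin 2) × (Fin 2 × Fin 2)) ((Fin 2 × Fin 2) × (Fin 2 × Fin 2)) ℂ)
    + c • ((sigma3 ⊗ₖ sigma3) ⊗ₖ (sigma3 ⊗ₖ (1 : Matrix (Fin 2) (Fin 2) ℂ))
        + (sigma3 ⊗ₖ (1 : Matrix (Fin 2) (Fin 2) ℂ)) ⊗ₖ (sigma1 ⊗ₖ sigma1)))
  = (1 / 2 : ℂ) •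
    ( (((1/2:ℂ)•(1+(1:ℂ)•sigma3)) ⊗ₖ ((1/2:ℂ)•(1+(1:ℂ)•sigma3))) ⊗ₖ (((1/2:ℂ)•(1+((1:ℂ)*c)•(sigma3+sigma1))) ⊗ₖ ((1/2:ℂ)•(1+(1:ℂ)•sigma1)))
    + (((1/2:ℂ)•(1+(-1:ℂ)•sigma3)) ⊗ₖ ((1/2:ℂ)•(1+(1:ℂ)•sigma3))) ⊗ₖ (((1/2:ℂ)•(1+((-1:ℂ)*c)•(sigma3+sigma1))) ⊗ₖ ((1/2:ℂ)•(1+(1:ℂ)•sigma1)))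
    + (((1/2:ℂ)•(1+(1:ℂ)•sigma3)) ⊗ₖ ((1/2:ℂ)•(1+(1:ℂ)•sigma3))) ⊗ₖ (((1/2:ℂ)•(1+((1:ℂ)*c)•(sigma3-sigma1))) ⊗ₖ ((1/2:ℂ)•(1+(-1:ℂ)•sigma1)))
    + (((1/2:ℂ)•(1+(-1:ℂ)•sigma3)) ⊗ₖ ((1/2:ℂ)•(1+(1:ℂ)•sigma3))) ⊗ₖ (((1/2:ℂ)•(1+((-1:ℂ)*c)•(sigma3-sigma1))) ⊗ₖ ((1/2:ℂ)•(1+(-1:ℂ)•sigma1)))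
    + (((1/2:ℂ)•(1+(1:ℂ)•sigma3)) ⊗ₖ ((1/2:ℂ)•(1+(-1:ℂ)•sigma3))) ⊗ₖ (((1/2:ℂ)•(1+((-1:ℂ)*c)•(sigma3-sigma1))) ⊗ₖ ((1/2:ℂ)•(1+(1:ℂ)•sigma1)))
    + (((1/2:ℂ)•(1+(-1:ℂ)•sigma3)) ⊗ₖ ((1/2:ℂ)•(1+(-1:ℂ)•sigma3))) ⊗ₖ (((1/2:ℂ)•(1+((1:ℂ)*c)•(sigma3-sigma1))) ⊗ₖ ((1/2:ℂ)•(1+(1:ℂ)•sigma1)))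
    + (((1/2:ℂ)•(1+(1:ℂ)•sigma3)) ⊗ₖ ((1/2:ℂ)•(1+(-1:ℂ)•sigma3))) ⊗ₖ (((1/2:ℂ)•(1+((-1:ℂ)*c)•(sigma3+sigma1))) ⊗ₖ ((1/2:ℂ)•(1+(-1:ℂ)•sigma1)))
    + (((1/2:ℂ)•(1+(-1:ℂ)•sigma3)) ⊗ₖ ((1/2:ℂ)•(1+(-1:ℂ)•sigma3))) ⊗ₖ (((1/2:ℂ)•(1+((1:ℂ)*c)•(sigma3+sigma1))) ⊗ₖ ((1/2:ℂ)•(1+(-1:ℂ)•sigma1)))) := by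
  have h : sigma3 - sigma1 = sigma3 + (-1:ℂ)•sigma1 := by module
  rw [h]
  simp only [smul_add, Matrix.add_kronecker, Matrix.kronecker_add,
    Matrix.smul_kronecker, Matrix.kronecker_smul, smul_smul, Matrix.one_kronecker_one]
  module

private lemma decomp :
    WCyril = (1 / 2 : ℂ) •
      ( (Pz true  ⊗ₖ Pz true)  ⊗ₖ (Pα true  ⊗ₖ Px true)
      + (Pz false ⊗ₖ Pz true)  ⊗ₖ (Pα false ⊗ₖ Px true)
      + (Pz true  ⊗ₖ Pz true)  ⊗ₖ (Pβ true  ⊗ₖ Px false)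
      + (Pz false ⊗ₖ Pz true)  ⊗ₖ (Pβ false ⊗ₖ Px false)
      + (Pz true  ⊗ₖ Pz false) ⊗ₖ (Pβ false ⊗ₖ Px true)
      + (Pz false ⊗ₖ Pz false) ⊗ₖ (Pβ true  ⊗ₖ Px true)
      + (Pz true  ⊗ₖ Pz false) ⊗ₖ (Pα false ⊗ₖ Px false)
      + (Pz false ⊗ₖ Pz false) ⊗ₖ (Pα true  ⊗ₖ Px false) ) := by
  have := decomp_aux ((Real.sqrt 2 : ℂ))⁻¹
  simpa only [WCyril, Pz, Px, Pα, Pβ, if_true, if_false, Bool.cond_true, Bool.false_eq_true] using this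

private lemma sqrt2_sq : ((Real.sqrt 2 : ℂ))⁻¹ * ((Real.sqrt 2 : ℂ))⁻¹ = 1 / 2 := by
  rw [← mul_inv]
  norm_cast
  rw [Real.mul_self_sqrt (by norm_num)]
  norm_num

private lemma psd_of_proj {M : Matrix (Fin 2) (Fin 2) ℂ}
    (hH : Mᴴ = M) (hI : M * M = M) : M.PosSemidef := by
  have : M = Mᴴ * M := by rw [hH, hI]
  rw [this]; exact Matrix.posSemidef_conjTranspose_mul_self M

private lemma psd_half_of_proj {M : Matrix (Fin 2) (Fin 2) ℂ}
    (hH : Mᴴ = M) (hI : M * M = M) : ((1/2 : ℂ) • M).PosSemidef := by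
  have key : (1/2 : ℂ) • M = (((Real.sqrt 2 : ℂ))⁻¹ • M)ᴴ * (((Real.sqrt 2 : ℂ))⁻¹ • M) := by
    rw [Matrix.conjTranspose_smul, hH, Matrix.smul_mul, Matrix.mul_smul, hI, smul_smul]
    congr 1
    rw [← sqrt2_sq]
    congr 1
    simp [star_inv₀, Complex.star_def, Complex.conj_ofReal]
  rw [key]
  exact Matrix.posSemidef_conjTranspose_mul_self _

/-- `(1/2)•(1+A)` is an idempotent Hermitian when `A` is a Hermitian involution. -/
private lemma proj_of_inv {A : Matrix (Fin 2) (Fin 2) ℂ}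
    (hH : Aᴴ = A) (hI : A * A = 1) :
    ((1/2 : ℂ) • (1 + A))ᴴ = (1/2 : ℂ) • (1 + A) ∧
    ((1/2 : ℂ) • (1 + A)) * ((1/2 : ℂ) • (1 + A)) = (1/2 : ℂ) • (1 + A) := by
  constructor
  · rw [Matrix.conjTranspose_smul, Matrix.conjTranspose_add, Matrix.conjTranspose_one, hH]
    norm_num [starRingEnd_apply]
  · have hp : (1 + A) * (1 + A) = (2:ℂ) • (1 + A) := by
      rw [add_mul, mul_add, mul_add, hI, two_smul]
      simp only [one_mul, mul_one]
      abel
    rw [Matrix.smul_mul, Matrix.mul_smul, hp, smul_smul, smul_smul]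
    norm_num

private lemma sigma3_herm : sigma3ᴴ = sigma3 := by
  ext i j; fin_cases i <;> fin_cases j <;> simp [sigma3]
private lemma sigma1_herm : sigma1ᴴ = sigma1 := by
  ext i j; fin_cases i <;> fin_cases j <;> simp [sigma1]
private lemma sigma3_sq : sigma3 * sigma3 = 1 := by
  ext i j; fin_cases i <;> fin_cases j <;>
    simp [sigma3, Matrix.mul_apply, Fin.sum_univ_two, Matrix.one_apply]
private lemma sigma1_sq : sigma1 * sigma1 = 1 := by
  ext i j; fin_cases i <;> fin_cases j <;>
    simp [sigma1, Matrix.mul_apply, Fin.sum_univ_two, Matrix.one_apply]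
private lemma sigma31_sq : (sigma3 + sigma1) * (sigma3 + sigma1) = (2:ℂ) • 1 := by
  ext i j; fin_cases i <;> fin_cases j <;>
    simp [sigma1, sigma3, Matrix.mul_apply, Fin.sum_univ_two, Matrix.one_apply] <;> norm_num
private lemma sigma31_sq' : (sigma3 - sigma1) * (sigma3 - sigma1) = (2:ℂ) • 1 := by
  ext i j; fin_cases i <;> fin_cases j <;>
    simp [sigma1, sigma3, Matrix.mul_apply, Fin.sum_univ_two, Matrix.one_apply] <;> norm_num

private lemma sign_star (s : Bool) : star (if s then 1 else -1 : ℂ) = (if s then 1 else -1 : ℂ) := by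
  cases s <;> simp

private lemma Pz_psd (s : Bool) : (Pz s).PosSemidef := by
  obtain ⟨h1, h2⟩ := proj_of_inv (A := (if s then 1 else -1 : ℂ) • sigma3)
    (by rw [Matrix.conjTranspose_smul, sigma3_herm, sign_star])
    (by rw [Matrix.smul_mul, Matrix.mul_smul, smul_smul, sigma3_sq]; cases s <;> norm_num)
  exact psd_of_proj (M := Pz s) h1 h2

private lemma Pz_half_psd (s : Bool) : ((1/2:ℂ) • Pz s).PosSemidef := by
  obtain ⟨h1, h2⟩ := proj_of_inv (A := (if s then 1 else -1 : ℂ) • sigma3)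
    (by rw [Matrix.conjTranspose_smul, sigma3_herm, sign_star])
    (by rw [Matrix.smul_mul, Matrix.mul_smul, smul_smul, sigma3_sq]; cases s <;> norm_num)
  exact psd_half_of_proj (M := Pz s) h1 h2

private lemma Px_psd (s : Bool) : (Px s).PosSemidef := by
  obtain ⟨h1, h2⟩ := proj_of_inv (A := (if s then 1 else -1 : ℂ) • sigma1)
    (by rw [Matrix.conjTranspose_smul, sigma1_herm, sign_star])
    (by rw [Matrix.smul_mul, Matrix.mul_smul, smul_smul, sigma1_sq]; cases s <;> norm_num)
  exact psd_of_proj (M := Px s) h1 h2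

private lemma coeff_star (s : Bool) :
    star ((if s then 1 else -1 : ℂ) * ((Real.sqrt 2 : ℂ))⁻¹)
      = (if s then 1 else -1 : ℂ) * ((Real.sqrt 2 : ℂ))⁻¹ := by
  cases s <;> simp [star_mul', star_inv₀, Complex.star_def, Complex.conj_ofReal]

private lemma coeff_sq (s : Bool) :
    ((if s then 1 else -1 : ℂ) * ((Real.sqrt 2 : ℂ))⁻¹)
      * ((if s then 1 else -1 : ℂ) * ((Real.sqrt 2 : ℂ))⁻¹) = 1/2 := by
  have := sqrt2_sq
  cases s <;> simp <;> ring_nf <;> ring_nf at this <;> linear_combination this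

private lemma Pα_psd (s : Bool) : (Pα s).PosSemidef := by
  obtain ⟨h1, h2⟩ := proj_of_inv
    (A := ((if s then 1 else -1 : ℂ) * ((Real.sqrt 2 : ℂ))⁻¹) • (sigma3 + sigma1))
    (by rw [Matrix.conjTranspose_smul, Matrix.conjTranspose_add, sigma3_herm, sigma1_herm,
          coeff_star])
    (by rw [Matrix.smul_mul, Matrix.mul_smul, smul_smul, sigma31_sq, smul_smul, coeff_sq]
        norm_num)
  exact psd_of_proj (M := Pα s) h1 h2

private lemma Pβ_psd (s : Bool) : (Pβ s).PosSemidef := by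
  obtain ⟨h1, h2⟩ := proj_of_inv
    (A := ((if s then 1 else -1 : ℂ) * ((Real.sqrt 2 : ℂ))⁻¹) • (sigma3 - sigma1))
    (by rw [Matrix.conjTranspose_smul, Matrix.conjTranspose_sub, sigma3_herm, sigma1_herm,
          coeff_star])
    (by rw [Matrix.smul_mul, Matrix.mul_smul, smul_smul, sigma31_sq', smul_smul, coeff_sq]
        norm_num)
  exact psd_of_proj (M := Pβ s) h1 h2

/-- `W^{Cyril}` admits the fully separable decomposition into the eight listed
tensor products of rank-one projectors; hence it is separable across
`A_I|A_O|B_I|B_O` (a finite sum of tensor products of positive semidefinite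
one-qubit operators). -/
theorem WCyril_fully_separable :
    WCyril = (1 / 2 : ℂ) •
      ( (Pz true  ⊗ₖ Pz true)  ⊗ₖ (Pα true  ⊗ₖ Px true)
      + (Pz false ⊗ₖ Pz true)  ⊗ₖ (Pα false ⊗ₖ Px true)
      + (Pz true  ⊗ₖ Pz true)  ⊗ₖ (Pβ true  ⊗ₖ Px false)
      + (Pz false ⊗ₖ Pz true)  ⊗ₖ (Pβ false ⊗ₖ Px false)
      + (Pz true  ⊗ₖ Pz false) ⊗ₖ (Pβ false ⊗ₖ Px true)
      + (Pz false ⊗ₖ Pz false) ⊗ₖ (Pβ true  ⊗ₖ Px true)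
      + (Pz true  ⊗ₖ Pz false) ⊗ₖ (Pα false ⊗ₖ Px false)
      + (Pz false ⊗ₖ Pz false) ⊗ₖ (Pα true  ⊗ₖ Px false) ) ∧
    ∃ (n : ℕ) (P Q R S : Fin n → Matrix (Fin 2) (Fin 2) ℂ),
      (∀ i, (P i).PosSemidef ∧ (Q i).PosSemidef ∧ (R i).PosSemidef ∧ (S i).PosSemidef) ∧
      WCyril = ∑ i, (P i ⊗ₖ Q i) ⊗ₖ (R i ⊗ₖ S i) := by
  refine ⟨decomp, 8,
    ![(1/2:ℂ) • Pz true, (1/2:ℂ) • Pz false, (1/2:ℂ) • Pz true, (1/2:ℂ) • Pz false,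
      (1/2:ℂ) • Pz true, (1/2:ℂ) • Pz false, (1/2:ℂ) • Pz true, (1/2:ℂ) • Pz false],
    ![Pz true, Pz true, Pz true, Pz true, Pz false, Pz false, Pz false, Pz false],
    ![Pα true, Pα false, Pβ true, Pβ false, Pβ false, Pβ true, Pα false, Pα true],
    ![Px true, Px true, Px false, Px false, Px true, Px true, Px false, Px false],
    ?_, ?_⟩
  · intro i
    fin_cases i
    · exact ⟨Pz_half_psd true, Pz_psd true, Pα_psd true, Px_psd true⟩
    · exact ⟨Pz_half_psd false, Pz_psd true, Pα_psd false, Px_psd true⟩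
    · exact ⟨Pz_half_psd true, Pz_psd true, Pβ_psd true, Px_psd false⟩
    · exact ⟨Pz_half_psd false, Pz_psd true, Pβ_psd false, Px_psd false⟩
    · exact ⟨Pz_half_psd true, Pz_psd false, Pβ_psd false, Px_psd true⟩
    · exact ⟨Pz_half_psd false, Pz_psd false, Pβ_psd true, Px_psd true⟩
    · exact ⟨Pz_half_psd true, Pz_psd false, Pα_psd false, Px_psd false⟩
    · exact ⟨Pz_half_psd false, Pz_psd false, Pα_psd true, Px_psd false⟩
  · rw [decomp]
    simp only [Fin.sum_univ_succ, Fin.sum_univ_zero, Matrix.cons_val_zero, Matrix.cons_val_succ,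
      Matrix.smul_kronecker, smul_add, add_zero]
    abel
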